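/- Let C⁽⁰⁾, C⁽^∞⁾ ∈ GLₙ(ℂ(z)) be two invertible matrices of rational functions over ℂ. Then there exists U ∈ GLₙ(ℂ(z)) such that U·C⁽⁰⁾ is regular at 0 (no entry has a pole at 0 and its value at 0 is invertible) and U·C⁽^∞⁾ is regular at ∞ (the matrix obtained by substituting 1/w for z is regular at w = 0). -/

import Mathlib

/-- Evaluation of a rational function over `ℂ` at a point of `ℂ`. -/
noncomputable def ratEval (r : RatFunc ℂ) (z : ℂ) : ℂ := r.eval (RingHom.id ℂ) z

/-- The substitution `z ↦ 1/w` on rational functions: `r(z) ↦ r(1/w)`. -/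
noncomputable def invSubst (r : RatFunc ℂ) : RatFunc ℂ :=
  r.eval (algebraMap ℂ (RatFunc ℂ)) (RatFunc.X)⁻¹

/-- A square matrix of rational functions is regular at the point `c ∈ ℂ`:
no entry has a pole at `c` and its value at `c` is invertible. -/
def RegularAtPt {n : ℕ} (C : Matrix (Fin n) (Fin n) (RatFunc ℂ)) (c : ℂ) : Prop :=
  (∀ i j, Polynomial.eval c (C i j).denom ≠ 0) ∧
    IsUnit (Matrix.of fun i j => ratEval (C i j) c).det

/-- A square matrix of rational functions is regular at `∞`: the matrix obtained by
the substitution `z ↦ 1/w` is regular at `w = 0`. -/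
def RegularAtInfty {n : ℕ} (C : Matrix (Fin n) (Fin n) (RatFunc ℂ)) : Prop :=
  RegularAtPt (Matrix.of fun i j => invSubst (C i j)) 0

section Auxiliary

set_option linter.unnecessarySeqFocus false

open Polynomial

namespace SimReg

variable {L : Type} [Field L]

/-- If `d ∣ q` and `q` evaluates to something nonzero, so does `d`. -/
lemma eval₂_ne_zero_of_dvd (φ : ℂ →+* L) (a : L) {d q : Polynomial ℂ} (hd : d ∣ q)
    (hq : q.eval₂ φ a ≠ 0) : d.eval₂ φ a ≠ 0 := by
  obtain ⟨e, rfl⟩ := hd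
  rw [Polynomial.eval₂_mul] at hq
  exact left_ne_zero_of_mul hq

lemma pf_add (φ : ℂ →+* L) (a : L) {x y : RatFunc ℂ}
    (hx : x.denom.eval₂ φ a ≠ 0) (hy : y.denom.eval₂ φ a ≠ 0) :
    (x + y).denom.eval₂ φ a ≠ 0 :=
  eval₂_ne_zero_of_dvd φ a (RatFunc.denom_add_dvd x y)
    (by rw [Polynomial.eval₂_mul]; exact mul_ne_zero hx hy)

lemma pf_mul (φ : ℂ →+* L) (a : L) {x y : RatFunc ℂ}
    (hx : x.denom.eval₂ φ a ≠ 0) (hy : y.denom.eval₂ φ a ≠ 0) :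
    (x * y).denom.eval₂ φ a ≠ 0 :=
  eval₂_ne_zero_of_dvd φ a (RatFunc.denom_mul_dvd x y)
    (by rw [Polynomial.eval₂_mul]; exact mul_ne_zero hx hy)

lemma pf_algebraMap (φ : ℂ →+* L) (a : L) (p : Polynomial ℂ) :
    (algebraMap (Polynomial ℂ) (RatFunc ℂ) p).denom.eval₂ φ a ≠ 0 := by
  rw [RatFunc.denom_algebraMap, Polynomial.eval₂_one]
  exact one_ne_zero

lemma pf_div (φ : ℂ →+* L) (a : L) {p q : Polynomial ℂ} (hq : q ≠ 0)
    (h : q.eval₂ φ a ≠ 0) :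
    (algebraMap (Polynomial ℂ) (RatFunc ℂ) p / algebraMap (Polynomial ℂ) (RatFunc ℂ) q).denom.eval₂ φ a ≠ 0 ∧
      (algebraMap (Polynomial ℂ) (RatFunc ℂ) p / algebraMap (Polynomial ℂ) (RatFunc ℂ) q).eval φ a
        = p.eval₂ φ a / q.eval₂ φ a := by
  have hdvd : (algebraMap (Polynomial ℂ) (RatFunc ℂ) p / algebraMap (Polynomial ℂ) (RatFunc ℂ) q).denom ∣ q :=
    (RatFunc.denom_dvd hq).mpr ⟨p, rfl⟩
  have hpf := eval₂_ne_zero_of_dvd φ a hdvd h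
  refine ⟨hpf, ?_⟩
  have hqz : algebraMap (Polynomial ℂ) (RatFunc ℂ) q ≠ 0 := RatFunc.algebraMap_ne_zero hq
  have hmul : (algebraMap (Polynomial ℂ) (RatFunc ℂ) p / algebraMap (Polynomial ℂ) (RatFunc ℂ) q)
      * algebraMap (Polynomial ℂ) (RatFunc ℂ) q = algebraMap (Polynomial ℂ) (RatFunc ℂ) p := div_mul_cancel₀ _ hqz
  have := congrArg (fun z : RatFunc ℂ => z.eval φ a) hmul
  rw [RatFunc.eval_mul φ a hpf (pf_algebraMap φ a q)] at this
  simp only [RatFunc.eval_algebraMap] at this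
  simp only [Algebra.algebraMap_self, Polynomial.map_id] at this ⊢
  field_simp [h] at this ⊢
  linear_combination this

/-- Key lemma at `0` : multiplying by a large power of `X` makes a rational function
pole-free at `0` with value `0`. -/
lemma key0 (r : RatFunc ℂ) : ∃ k : ℕ, ∀ m : ℕ, k + 1 ≤ m →
    (RatFunc.X ^ m * r).denom.eval₂ (RingHom.id ℂ) 0 ≠ 0 ∧
      (RatFunc.X ^ m * r).eval (RingHom.id ℂ) 0 = 0 := by
  by_cases hr : r = 0
  · refine ⟨0, fun m _ => ?_⟩
    subst hr
    rw [mul_zero]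
    simp [RatFunc.denom_zero]
  · obtain ⟨q1, hq1, hnd⟩ := r.denom.exists_eq_pow_rootMultiplicity_mul_and_not_dvd
      (RatFunc.denom_ne_zero r) 0
    set k := r.denom.rootMultiplicity 0 with hk
    rw [map_zero, sub_zero] at hq1 hnd
    have hq1ne : q1 ≠ 0 := by
      intro h
      exact RatFunc.denom_ne_zero r (by rw [hq1, h, mul_zero])
    have hq10 : q1.eval₂ (RingHom.id ℂ) 0 ≠ 0 := by
      rw [Polynomial.eval₂_at_zero]
      simpa [Polynomial.X_dvd_iff] using hnd
    have hs : RatFunc.X ^ k * r = algebraMap (Polynomial ℂ) (RatFunc ℂ) r.num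
        / algebraMap (Polynomial ℂ) (RatFunc ℂ) q1 := by
      conv_lhs => rw [← RatFunc.num_div_denom r]
      rw [hq1, map_mul, map_pow, RatFunc.algebraMap_X]
      have hXne : (RatFunc.X : RatFunc ℂ) ^ k ≠ 0 := pow_ne_zero _ RatFunc.X_ne_zero
      have hq1z : algebraMap (Polynomial ℂ) (RatFunc ℂ) q1 ≠ 0 := RatFunc.algebraMap_ne_zero hq1ne
      field_simp
    refine ⟨k, fun m hm => ?_⟩
    have hrw : RatFunc.X ^ m * r = algebraMap (Polynomial ℂ) (RatFunc ℂ) (Polynomial.X ^ (m - k))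
        * (algebraMap (Polynomial ℂ) (RatFunc ℂ) r.num / algebraMap (Polynomial ℂ) (RatFunc ℂ) q1) := by
      rw [map_pow, RatFunc.algebraMap_X, ← hs, ← mul_assoc, ← pow_add]
      congr 2
      omega
    obtain ⟨hpf2, hev2⟩ := pf_div (RingHom.id ℂ) (0 : ℂ) hq1ne hq10
    have hpf1 := pf_algebraMap (RingHom.id ℂ) (0 : ℂ) (Polynomial.X ^ (m - k))
    have hev1 : (algebraMap (Polynomial ℂ) (RatFunc ℂ) (Polynomial.X ^ (m - k))).eval (RingHom.id ℂ) (0:ℂ) = 0 := by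
      rw [RatFunc.eval_algebraMap]
      simp [zero_pow (by omega : m - k ≠ 0)]
    constructor
    · rw [hrw]
      exact pf_mul _ _ hpf1 hpf2
    · rw [hrw, RatFunc.eval_mul (RingHom.id ℂ) (0:ℂ) hpf1 hpf2, hev1, zero_mul]

end SimReg

namespace SimReg2
open SimReg

lemma transX : Transcendental ℂ (RatFunc.X : RatFunc ℂ) := by
  have := (transcendental_algebraMap_iff (R := ℂ) (S := Polynomial ℂ) (A := RatFunc ℂ)
      (a := Polynomial.X) (IsFractionRing.injective _ _)).mpr (Polynomial.transcendental_X ℂ)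
  rwa [RatFunc.algebraMap_X] at this

lemma transXinv : Transcendental ℂ ((RatFunc.X : RatFunc ℂ))⁻¹ :=
  fun h => transX (IsAlgebraic.inv_iff.mp h)

lemma henz {q : Polynomial ℂ} (hq : q ≠ 0) :
    q.eval₂ (algebraMap ℂ (RatFunc ℂ)) (RatFunc.X)⁻¹ ≠ 0 := by
  intro h
  exact transXinv ⟨q, hq, by rwa [Polynomial.aeval_def]⟩

lemma invSubst_add (x y : RatFunc ℂ) : invSubst (x + y) = invSubst x + invSubst y :=
  RatFunc.eval_add _ _ (henz (RatFunc.denom_ne_zero x)) (henz (RatFunc.denom_ne_zero y))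

lemma invSubst_mul (x y : RatFunc ℂ) : invSubst (x * y) = invSubst x * invSubst y :=
  RatFunc.eval_mul _ _ (henz (RatFunc.denom_ne_zero x)) (henz (RatFunc.denom_ne_zero y))

lemma invSubst_zero : invSubst 0 = 0 := RatFunc.eval_zero _ _

lemma invSubst_one : invSubst 1 = 1 := RatFunc.eval_one _ _

lemma invSubst_neg (x : RatFunc ℂ) : invSubst (-x) = -invSubst x := by
  have h := invSubst_add x (-x)
  rw [add_neg_cancel, invSubst_zero] at h
  exact eq_neg_of_add_eq_zero_right h.symm
  
lemma invSubst_sub (x y : RatFunc ℂ) : invSubst (x - y) = invSubst x - invSubst y := by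
  rw [sub_eq_add_neg, invSubst_add, invSubst_neg, sub_eq_add_neg]

lemma invSubst_ne_zero {x : RatFunc ℂ} (hx : x ≠ 0) : invSubst x ≠ 0 := by
  unfold invSubst RatFunc.eval
  exact div_ne_zero (henz (RatFunc.num_ne_zero hx)) (henz (RatFunc.denom_ne_zero x))

lemma invSubst_inv {x : RatFunc ℂ} (hx : x ≠ 0) : invSubst x⁻¹ = (invSubst x)⁻¹ := by
  have h : invSubst x⁻¹ * invSubst x = 1 := by
    rw [← invSubst_mul, inv_mul_cancel₀ hx, invSubst_one]
  exact eq_inv_of_mul_eq_one_left h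

lemma invSubst_algebraMap (p : Polynomial ℂ) :
    invSubst (algebraMap (Polynomial ℂ) (RatFunc ℂ) p)
      = p.eval₂ (algebraMap ℂ (RatFunc ℂ)) (RatFunc.X)⁻¹ := by
  unfold invSubst
  rw [RatFunc.eval_algebraMap]
  simp

lemma invSubst_X_pow (m : ℕ) : invSubst ((RatFunc.X : RatFunc ℂ) ^ m) = (RatFunc.X)⁻¹ ^ m := by
  have : ((RatFunc.X : RatFunc ℂ) ^ m) = algebraMap (Polynomial ℂ) (RatFunc ℂ)
      (Polynomial.X ^ m) := by rw [map_pow, RatFunc.algebraMap_X]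
  rw [this, invSubst_algebraMap]
  simp

/-- `g m = X^m / (1 + X^m)`. -/
noncomputable def gm (m : ℕ) : RatFunc ℂ := RatFunc.X ^ m * (1 + RatFunc.X ^ m)⁻¹

lemma one_add_X_pow_ne_zero_poly (m : ℕ) (hm : m ≠ 0) :
    (1 + Polynomial.X ^ m : Polynomial ℂ) ≠ 0 := by
  intro h
  have := congrArg (Polynomial.eval 0) h
  simp [zero_pow hm] at this

lemma one_add_X_pow_ne_zero (m : ℕ) (hm : m ≠ 0) :
    ((1 : RatFunc ℂ) + RatFunc.X ^ m) ≠ 0 := by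
  have : ((1 : RatFunc ℂ) + RatFunc.X ^ m) = algebraMap (Polynomial ℂ) (RatFunc ℂ)
      (1 + Polynomial.X ^ m) := by rw [map_add, map_one, map_pow, RatFunc.algebraMap_X]
  rw [this]
  exact RatFunc.algebraMap_ne_zero (one_add_X_pow_ne_zero_poly m hm)

lemma invSubst_one_sub_gm (m : ℕ) (hm : m ≠ 0) : invSubst (1 - gm m) = gm m := by
  have hx : (RatFunc.X : RatFunc ℂ) ≠ 0 := RatFunc.X_ne_zero
  have hxm : (RatFunc.X : RatFunc ℂ) ^ m ≠ 0 := pow_ne_zero _ hx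
  have h1 : ((1 : RatFunc ℂ) + RatFunc.X ^ m) ≠ 0 := one_add_X_pow_ne_zero m hm
  have h1' : ((1 : RatFunc ℂ) + (RatFunc.X)⁻¹ ^ m) ≠ 0 := by
    intro h
    apply h1
    have h2 : ((RatFunc.X : RatFunc ℂ))⁻¹ ^ m = -1 := eq_neg_of_add_eq_zero_right h
    have h3 : (RatFunc.X : RatFunc ℂ) ^ m = -1 := by
      rw [← inv_inv ((RatFunc.X : RatFunc ℂ) ^ m), ← inv_pow, h2]
      norm_num
    rw [h3, add_neg_cancel]
  have hg : invSubst (gm m) = 1 - gm m := by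
    unfold gm
    rw [invSubst_mul, invSubst_X_pow, invSubst_inv h1, invSubst_add, invSubst_one, invSubst_X_pow]
    rw [eq_sub_iff_add_eq]
    field_simp [hx, h1, h1']
    have h1'' : ((RatFunc.X : RatFunc ℂ) ^ m + 1) ≠ 0 := by rwa [add_comm] at h1
    have h4 : (1 / (RatFunc.X : RatFunc ℂ)) ^ m * (1 + (RatFunc.X : RatFunc ℂ) ^ m)
        = 1 + (1 / (RatFunc.X : RatFunc ℂ)) ^ m := by
      rw [one_div, inv_pow, mul_add, mul_one, inv_mul_cancel₀ hxm, add_comm]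
    rw [h4, div_self (by rwa [one_div])]
  rw [invSubst_sub, invSubst_one, hg]
  ring

end SimReg2

namespace SimReg3
open SimReg SimReg2

/-- Rational functions with no pole at `0`. -/
noncomputable def O0 : Subring (RatFunc ℂ) where
  carrier := {r | r.denom.eval₂ (RingHom.id ℂ) 0 ≠ 0}
  mul_mem' hx hy := pf_mul _ _ hx hy
  add_mem' hx hy := pf_add _ _ hx hy
  one_mem' := by simp [RatFunc.denom_one]
  zero_mem' := by simp [RatFunc.denom_zero]
  neg_mem' {x} hx := by
    have h : -x = algebraMap (Polynomial ℂ) (RatFunc ℂ) (-1) * x := by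
      rw [map_neg, map_one, neg_one_mul]
    have := pf_mul (RingHom.id ℂ) (0 : ℂ) (pf_algebraMap (RingHom.id ℂ) (0 : ℂ) (-1)) hx
    rwa [← h] at this

lemma mem_O0 {r : RatFunc ℂ} : r ∈ O0 ↔ r.denom.eval₂ (RingHom.id ℂ) 0 ≠ 0 := Iff.rfl

/-- Evaluation at `0` as a ring hom on `O0`. -/
noncomputable def ev0 : O0 →+* ℂ where
  toFun r := (r : RatFunc ℂ).eval (RingHom.id ℂ) 0
  map_one' := RatFunc.eval_one _ _
  map_mul' x y := RatFunc.eval_mul _ _ x.2 y.2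
  map_zero' := RatFunc.eval_zero _ _
  map_add' x y := RatFunc.eval_add _ _ x.2 y.2

lemma det_ne_zero {n : ℕ} (P : Matrix (Fin n) (Fin n) (RatFunc ℂ))
    (h : ∀ i j, P i j ∈ O0)
    (hu : (Matrix.of fun i j => (P i j).eval (RingHom.id ℂ) 0).det ≠ 0) :
    P.det ≠ 0 := by
  set Q : Matrix (Fin n) (Fin n) O0 := fun i j => ⟨P i j, h i j⟩ with hQ
  intro h0
  have h1 : (O0.subtype).mapMatrix Q = P := by ext i j; rfl
  have h2 : O0.subtype Q.det = 0 := by rw [RingHom.map_det, h1, h0]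
  have h3 : Q.det = 0 := by
    apply Subtype.ext
    simpa using h2
  have h4 : ev0 Q.det = 0 := by rw [h3]; exact map_zero _
  rw [RingHom.map_det] at h4
  have h5 : (Matrix.of fun i j => (P i j).eval (RingHom.id ℂ) 0) = ev0.mapMatrix Q := by
    ext i j; rfl
  exact hu (by rw [h5]; exact h4)

end SimReg3

namespace SimReg4
open SimReg SimReg2 SimReg3

/-- Main entry lemma: `algebraMap p + g_m * r` is pole-free at `0` with value `p.eval 0`,
provided `X^m * r` is pole-free at `0` with value `0`. -/
lemma entry0 {m : ℕ} (hm : m ≠ 0) (p : Polynomial ℂ) (r : RatFunc ℂ)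
    (h1 : (RatFunc.X ^ m * r).denom.eval₂ (RingHom.id ℂ) 0 ≠ 0)
    (h2 : (RatFunc.X ^ m * r).eval (RingHom.id ℂ) 0 = 0) :
    (algebraMap (Polynomial ℂ) (RatFunc ℂ) p + gm m * r).denom.eval₂ (RingHom.id ℂ) 0 ≠ 0 ∧
      (algebraMap (Polynomial ℂ) (RatFunc ℂ) p + gm m * r).eval (RingHom.id ℂ) 0 = p.eval 0 := by
  have hq : (1 + Polynomial.X ^ m : Polynomial ℂ) ≠ 0 := one_add_X_pow_ne_zero_poly m hm
  have hqe : (1 + Polynomial.X ^ m : Polynomial ℂ).eval₂ (RingHom.id ℂ) 0 ≠ 0 := by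
    simp [zero_pow hm]
  have hwrw : ((1 : RatFunc ℂ) + RatFunc.X ^ m)⁻¹
      = algebraMap (Polynomial ℂ) (RatFunc ℂ) 1 / algebraMap (Polynomial ℂ) (RatFunc ℂ)
        (1 + Polynomial.X ^ m) := by
    rw [map_one, one_div, map_add, map_one, map_pow, RatFunc.algebraMap_X]
  obtain ⟨hw1, hw2⟩ := pf_div (RingHom.id ℂ) (0 : ℂ) hq hqe
  rw [← hwrw] at hw1 hw2
  have hwv : ((1 : RatFunc ℂ) + RatFunc.X ^ m)⁻¹.eval (RingHom.id ℂ) 0 = 1 := by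
    rw [hw2]
    simp [zero_pow hm]
  have hgrw : gm m * r = (RatFunc.X ^ m * r) * ((1 : RatFunc ℂ) + RatFunc.X ^ m)⁻¹ := by
    unfold gm; ring
  have hpfg : (gm m * r).denom.eval₂ (RingHom.id ℂ) 0 ≠ 0 := by
    rw [hgrw]; exact pf_mul _ _ h1 hw1
  have hevg : (gm m * r).eval (RingHom.id ℂ) 0 = 0 := by
    rw [hgrw, RatFunc.eval_mul (RingHom.id ℂ) (0 : ℂ) h1 hw1, h2, zero_mul]
  constructor
  · exact pf_add _ _ (pf_algebraMap _ _ p) hpfg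
  · rw [RatFunc.eval_add (RingHom.id ℂ) (0 : ℂ) (pf_algebraMap _ _ p) hpfg, hevg, add_zero,
      RatFunc.eval_algebraMap]
    simp [Polynomial.coeff_zero_eq_eval_zero]

end SimReg4

end Auxiliary

set_option synthInstance.maxHeartbeats 1000000
set_option maxHeartbeats 1000000

/-- Let `C⁽⁰⁾, C⁽^∞⁾ ∈ GLₙ(ℂ(z))`. There is `U ∈ GLₙ(ℂ(z))` such
that `U·C⁽⁰⁾` is regular at `0` and `U·C⁽^∞⁾` is regular at `∞`. -/
theorem simultaneous_regularization_at_zero_and_infinity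
    (n : ℕ)
    (C0 : Matrix (Fin n) (Fin n) (RatFunc ℂ)) (hC0 : C0.det ≠ 0)
    (Cinf : Matrix (Fin n) (Fin n) (RatFunc ℂ)) (hCinf : Cinf.det ≠ 0) :
    ∃ U : Matrix (Fin n) (Fin n) (RatFunc ℂ),
      U.det ≠ 0 ∧ RegularAtPt (U * C0) 0 ∧ RegularAtInfty (U * Cinf) := by
  classical
  have hC0u : IsUnit C0.det := isUnit_iff_ne_zero.mpr hC0
  set N : Matrix (Fin n) (Fin n) (RatFunc ℂ) := C0⁻¹ * Cinf with hNdef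
  have hC0inv : C0⁻¹ * C0 = 1 := Matrix.nonsing_inv_mul C0 hC0u
  have hdetC0inv : (C0⁻¹).det ≠ 0 := by
    rw [Matrix.det_nonsing_inv, Ring.inverse_eq_inv]
    exact inv_ne_zero hC0
  have hNdet : N.det ≠ 0 := by
    rw [hNdef, Matrix.det_mul]
    exact mul_ne_zero hdetC0inv hCinf
  have hNu : IsUnit N.det := isUnit_iff_ne_zero.mpr hNdet
  set B : Matrix (Fin n) (Fin n) (RatFunc ℂ) := N⁻¹ with hBdef
  have hBN : B * N = 1 := Matrix.nonsing_inv_mul N hNu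
  -- choose m
  choose k1 hk1 using fun i j : Fin n =>
    SimReg.key0 (B i j - (1 : Matrix (Fin n) (Fin n) (RatFunc ℂ)) i j)
  choose k2 hk2 using fun i j : Fin n =>
    SimReg.key0 (invSubst (N i j - (1 : Matrix (Fin n) (Fin n) (RatFunc ℂ)) i j))
  set S : ℕ := Finset.univ.sup (fun p : Fin n × Fin n => max (k1 p.1 p.2) (k2 p.1 p.2)) with hS
  set m : ℕ := S + 1 with hmdef
  have hm0 : m ≠ 0 := by omega
  have hsup : ∀ i j : Fin n, max (k1 i j) (k2 i j) ≤ S := fun i j =>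
    Finset.le_sup (f := fun p : Fin n × Fin n => max (k1 p.1 p.2) (k2 p.1 p.2))
      (Finset.mem_univ (i, j))
  have hmk1 : ∀ i j : Fin n, k1 i j + 1 ≤ m := fun i j => by
    have := hsup i j; have := le_max_left (k1 i j) (k2 i j); omega
  have hmk2 : ∀ i j : Fin n, k2 i j + 1 ≤ m := fun i j => by
    have := hsup i j; have := le_max_right (k1 i j) (k2 i j); omega
  set A : Matrix (Fin n) (Fin n) (RatFunc ℂ) :=
    (1 - SimReg2.gm m) • (1 : Matrix (Fin n) (Fin n) (RatFunc ℂ)) + SimReg2.gm m • B with hAdef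
  have hAentry : ∀ i j, A i j = algebraMap (Polynomial ℂ) (RatFunc ℂ) (if i = j then 1 else 0)
      + SimReg2.gm m * (B i j - (1 : Matrix (Fin n) (Fin n) (RatFunc ℂ)) i j) := by
    intro i j
    by_cases h : i = j <;>
      simp [hAdef, Matrix.add_apply, Matrix.smul_apply, Matrix.one_apply, h, smul_eq_mul,
        map_one, map_zero] <;> ring
  have hANmat : A * N = (1 - SimReg2.gm m) • N + SimReg2.gm m • (1 : Matrix (Fin n) (Fin n) (RatFunc ℂ)) := by
    rw [hAdef, Matrix.add_mul, Matrix.smul_mul, Matrix.smul_mul, hBN, Matrix.one_mul]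
  have hANentry : ∀ i j, (A * N) i j
      = algebraMap (Polynomial ℂ) (RatFunc ℂ) (if i = j then 1 else 0)
      + (1 - SimReg2.gm m) * (N i j - (1 : Matrix (Fin n) (Fin n) (RatFunc ℂ)) i j) := by
    intro i j
    rw [hANmat]
    by_cases h : i = j <;>
      simp [Matrix.add_apply, Matrix.smul_apply, Matrix.one_apply, h, smul_eq_mul,
        map_one, map_zero] <;> ring
  -- regularity of A at 0
  have hA0 : ∀ i j, (A i j).denom.eval₂ (RingHom.id ℂ) 0 ≠ 0 ∧
      (A i j).eval (RingHom.id ℂ) 0 = (if i = j then (1:ℂ) else 0) := by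
    intro i j
    rw [hAentry i j]
    obtain ⟨h1, h2⟩ := SimReg4.entry0 hm0 (if i = j then 1 else 0) _
      (hk1 i j m (hmk1 i j)).1 (hk1 i j m (hmk1 i j)).2
    refine ⟨h1, ?_⟩
    rw [h2]
    split_ifs <;> simp
  -- invSubst of the entries of A*N
  have hinvAN : ∀ i j, invSubst ((A * N) i j)
      = algebraMap (Polynomial ℂ) (RatFunc ℂ) (if i = j then 1 else 0)
      + SimReg2.gm m * invSubst (N i j - (1 : Matrix (Fin n) (Fin n) (RatFunc ℂ)) i j) := by
    intro i j
    rw [hANentry i j, SimReg2.invSubst_add, SimReg2.invSubst_mul, SimReg2.invSubst_one_sub_gm m hm0]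
    congr 1
    split_ifs <;> simp [SimReg2.invSubst_one, SimReg2.invSubst_zero]
  have hAN0 : ∀ i j, (invSubst ((A * N) i j)).denom.eval₂ (RingHom.id ℂ) 0 ≠ 0 ∧
      (invSubst ((A * N) i j)).eval (RingHom.id ℂ) 0 = (if i = j then (1:ℂ) else 0) := by
    intro i j
    rw [hinvAN i j]
    obtain ⟨h1, h2⟩ := SimReg4.entry0 hm0 (if i = j then 1 else 0) _
      (hk2 i j m (hmk2 i j)).1 (hk2 i j m (hmk2 i j)).2
    refine ⟨h1, ?_⟩
    rw [h2]
    split_ifs <;> simp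
  -- assembly
  have hAevalmat : (Matrix.of fun i j => ratEval (A i j) 0) = 1 := by
    ext i j
    show (A i j).eval (RingHom.id ℂ) 0 = (1 : Matrix (Fin n) (Fin n) ℂ) i j
    rw [(hA0 i j).2, Matrix.one_apply]
  have hAdetne : A.det ≠ 0 := by
    refine SimReg3.det_ne_zero A (fun i j => (hA0 i j).1) ?_
    have : (Matrix.of fun i j => (A i j).eval (RingHom.id ℂ) 0) = 1 := hAevalmat
    rw [this, Matrix.det_one]
    exact one_ne_zero
  refine ⟨A * C0⁻¹, ?_, ?_, ?_⟩
  · rw [Matrix.det_mul]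
    exact mul_ne_zero hAdetne hdetC0inv
  · have hUC0 : A * C0⁻¹ * C0 = A := by rw [Matrix.mul_assoc, hC0inv, Matrix.mul_one]
    rw [hUC0]
    refine ⟨fun i j => (hA0 i j).1, ?_⟩
    rw [hAevalmat]
    simp
  · have hUCinf : A * C0⁻¹ * Cinf = A * N := by rw [Matrix.mul_assoc, hNdef]
    rw [hUCinf]
    refine ⟨fun i j => (hAN0 i j).1, ?_⟩
    have : (Matrix.of fun i j =>
        ratEval ((Matrix.of fun i j => invSubst ((A * N) i j)) i j) 0) = 1 := by
      ext i j
      show (invSubst ((A * N) i j)).eval (RingHom.id ℂ) 0 = (1 : Matrix (Fin n) (Fin n) ℂ) i j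
      rw [(hAN0 i j).2, Matrix.one_apply]
    rw [this]
    simp
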